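/- In the m-gluing graph K_n +_m K'_n with n ≥ 5 and 1 ≤ m ≤ n−2: (1) for u_1 ∈ Γ_m(v_0) and u_i ∈ Γ_m(v_0) with i ≠ 1, κ(u_1, u_i) = (n−1)/n; (2) for u_1 ∈ Γ_m(v_0) and u' ∈ V(K_n) \ (Γ_m(v_0) ∪ {u_0}), κ(u_1, u') = (n−2)/n; (3) for distinct u', u'' ∈ V(K_n) \ (Γ_m(v_0) ∪ {u_0}), κ(u', u'') = (n−2)/(n−1). -/

import Mathlib

open scoped Classical
noncomputable section

namespace OR

variable {V : Type*}

/-- The degree of a vertex. -/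
def deg (G : SimpleGraph V) (x : V) : ℕ := Nat.card (G.neighborSet x)

/-- The simple random walk measure at a vertex. -/
def rw (G : SimpleGraph V) (x : V) : V → ℝ :=
  fun v => if G.Adj x v then ((deg G x : ℝ))⁻¹ else 0

/-- A coupling between two measures on the vertex set. -/
def IsCoupling (μ ν : V → ℝ) (A : V → V → ℝ) : Prop :=
  (∀ u v, 0 ≤ A u v) ∧
  (Function.support fun p : V × V => A p.1 p.2).Finite ∧
  (∀ u, ∑ᶠ v, A u v = μ u) ∧ (∀ v, ∑ᶠ u, A u v = ν v)

/-- The 1-Wasserstein distance w.r.t. the graph distance. -/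
def W (G : SimpleGraph V) (μ ν : V → ℝ) : ℝ :=
  sInf { r | ∃ A, IsCoupling μ ν A ∧ r = ∑ᶠ u, ∑ᶠ v, A u v * (G.dist u v : ℝ) }

/-- The Ollivier–Ricci curvature. -/
def ricci (G : SimpleGraph V) (x y : V) : ℝ :=
  1 - W G (rw G x) (rw G y) / (G.dist x y : ℝ)

/-- The number of common neighbours of `x` and `y`. -/
def tri (G : SimpleGraph V) (x y : V) : ℕ := Nat.card {w | G.Adj x w ∧ G.Adj y w}



/-- Condition for a cross edge `u_i v_j` in the `m`-gluing graph. -/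
def cross (m : ℕ) {n : ℕ} (i j : Fin n) : Prop :=
  ((i : ℕ) = 0 ∧ (j : ℕ) = 0) ∨ ((i : ℕ) = 0 ∧ 1 ≤ (j : ℕ) ∧ (j : ℕ) ≤ m) ∨
    ((j : ℕ) = 0 ∧ 1 ≤ (i : ℕ) ∧ (i : ℕ) ≤ m)

/-- Adjacency of the `m`-gluing graph: `Sum.inl` is `K_n`, `Sum.inr` is `K'_n`. -/
def glueAdj (n m : ℕ) : Fin n ⊕ Fin n → Fin n ⊕ Fin n → Prop
  | .inl i, .inl j => i ≠ j
  | .inr i, .inr j => i ≠ j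
  | .inl i, .inr j => cross m i j
  | .inr j, .inl i => cross m i j

/-- The `m`-gluing graph `K_n +_m K'_n`. -/
def glue (n m : ℕ) : SimpleGraph (Fin n ⊕ Fin n) where
  Adj := glueAdj n m
  symm := by
    refine ⟨?_⟩
    rintro (i | i) (j | j) h <;> simp only [glueAdj] at h ⊢
    · exact h.symm
    · exact h
    · exact h
    · exact h.symm
  loopless := by
    refine ⟨?_⟩
    rintro (i | i) h <;> simp only [glueAdj] at h <;> exact h rfl

end OR

namespace OR

lemma W_eq {V : Type*} [Fintype V] (G : SimpleGraph V) (μ ν : V → ℝ) (A : V → V → ℝ)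
    (f : V → ℝ) (c : ℝ)
    (hA : IsCoupling μ ν A)
    (hcost : ∑ u, ∑ v, A u v * (G.dist u v : ℝ) = c)
    (hf : ∀ u v, f u - f v ≤ (G.dist u v : ℝ))
    (hdual : ∑ u, f u * μ u - ∑ u, f u * ν u = c) :
    W G μ ν = c := by
  set S := { r | ∃ A, IsCoupling μ ν A ∧ r = ∑ᶠ u, ∑ᶠ v, A u v * (G.dist u v : ℝ) } with hS
  have hmem : c ∈ S := by
    refine ⟨A, hA, ?_⟩
    simp only [finsum_eq_sum_of_fintype]
    exact hcost.symm
  have hlb : ∀ r ∈ S, c ≤ r := by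
    rintro r ⟨B, ⟨hpos, -, hrow, hcol⟩, rfl⟩
    simp only [finsum_eq_sum_of_fintype]
    have hrow' : ∀ u, ∑ v, B u v = μ u := fun u => by
      rw [← finsum_eq_sum_of_fintype]; exact hrow u
    have hcol' : ∀ v, ∑ u, B u v = ν v := fun v => by
      rw [← finsum_eq_sum_of_fintype]; exact hcol v
    have key : c = ∑ u, ∑ v, (B u v * f u - B u v * f v) := by
      rw [← hdual]
      simp only [Finset.sum_sub_distrib]
      congr 1
      · refine Finset.sum_congr rfl fun u _ => ?_
        rw [← hrow' u, Finset.mul_sum]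
        exact Finset.sum_congr rfl fun v _ => by ring
      · rw [Finset.sum_comm]
        refine Finset.sum_congr rfl fun v _ => ?_
        rw [← hcol' v, Finset.mul_sum]
        exact Finset.sum_congr rfl fun u _ => by ring
    rw [key]
    refine Finset.sum_le_sum fun u _ => Finset.sum_le_sum fun v _ => ?_
    rw [← mul_sub]
    exact mul_le_mul_of_nonneg_left (hf u v) (hpos u v)
  exact le_antisymm (csInf_le ⟨c, hlb⟩ hmem) (le_csInf ⟨c, hmem⟩ hlb)

lemma rw_nonneg {V : Type*} (G : SimpleGraph V) (x u : V) : 0 ≤ rw G x u := by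
  unfold rw; split <;> positivity

lemma rw_self {V : Type*} (G : SimpleGraph V) (x : V) : rw G x x = 0 := by
  simp [rw]

lemma one_le_dist {V : Type*} {G : SimpleGraph V} (hconn : G.Connected) {u v : V}
    (h : u ≠ v) : (1 : ℝ) ≤ (G.dist u v : ℝ) := by
  have h' := hconn.pos_dist_of_ne h
  exact_mod_cast h'

lemma lipschitz_of_mem_Icc {V : Type*} {G : SimpleGraph V} (hconn : G.Connected)
    {f : V → ℝ} (h0 : ∀ u, 0 ≤ f u) (h1 : ∀ u, f u ≤ 1) :
    ∀ u v, f u - f v ≤ (G.dist u v : ℝ) := by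
  intro u v
  by_cases h : u = v
  · subst h; simp
  · calc f u - f v ≤ 1 - 0 := by gcongr; exacts [h1 u, h0 v]
    _ = 1 := by ring
    _ ≤ _ := one_le_dist hconn h

lemma sum_ind {V : Type*} [Fintype V] (y : V) (g : V → ℝ) :
    ∑ u, (if u = y then (1:ℝ) else 0) * g u = g y := by
  have e : ∀ u, (if u = y then (1:ℝ) else 0) * g u = if u = y then g u else 0 := by
    intro u; split <;> simp
  rw [Finset.sum_congr rfl (fun u _ => e u), Finset.sum_ite_eq' Finset.univ y]; simp

lemma W_single {V : Type*} [Fintype V] {G : SimpleGraph V} (hconn : G.Connected)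
    {x y : V} (hadj : G.Adj x y) (c : ℝ)
    (hagree : ∀ u, u ≠ x → u ≠ y → rw G x u = rw G y u)
    (hμy : rw G x y = c) (hνx : rw G y x = c) :
    W G (rw G x) (rw G y) = c := by
  have hc : 0 ≤ c := hμy ▸ rw_nonneg G x y
  have hxy : x ≠ y := hadj.ne
  set A : V → V → ℝ := fun u v =>
    (if u = v ∧ u ≠ x ∧ u ≠ y then rw G x u else 0) + (if u = y ∧ v = x then c else 0) with hA
  have hdxy : (G.dist y x : ℝ) = 1 := by
    have h := SimpleGraph.dist_eq_one_iff_adj.mpr hadj.symm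
    rw [h]; norm_num
  refine W_eq G _ _ A (fun v => if v = y then 1 else 0) c ⟨?_, Set.toFinite _, ?_, ?_⟩ ?_ ?_ ?_
  · intro u v
    apply add_nonneg
    · split
      · exact rw_nonneg G x _
      · exact le_refl 0
    · split
      · exact hc
      · exact le_refl 0
  · intro u
    rw [finsum_eq_sum_of_fintype]
    simp only [hA]
    rw [Finset.sum_add_distrib]
    have h1 : ∑ v, (if u = v ∧ u ≠ x ∧ u ≠ y then rw G x u else 0)
        = if u ≠ x ∧ u ≠ y then rw G x u else 0 := by
      by_cases h : u ≠ x ∧ u ≠ y <;> simp [h, Finset.sum_ite_eq]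
    have h2 : ∑ v, (if u = y ∧ v = x then c else 0) = if u = y then c else 0 := by
      by_cases h : u = y <;> simp [h, Finset.sum_ite_eq']
    rw [h1, h2]
    by_cases hux : u = x
    · subst hux; rw [if_neg (by tauto), if_neg hxy, add_zero, rw_self]
    · by_cases huy : u = y
      · subst huy; rw [if_neg (by tauto), if_pos rfl, zero_add, ← hμy]
      · rw [if_pos ⟨hux, huy⟩, if_neg huy, add_zero]
  · intro v
    rw [finsum_eq_sum_of_fintype]
    simp only [hA]
    rw [Finset.sum_add_distrib]
    have e1 : ∀ u, (if u = v ∧ u ≠ x ∧ u ≠ y then rw G x u else 0)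
        = (if u = v then (if v ≠ x ∧ v ≠ y then rw G x v else 0) else 0) := by
      intro u
      by_cases h : u = v
      · subst h; by_cases h' : u ≠ x ∧ u ≠ y <;> simp [h']
      · simp [h]
    have h1 : ∑ u, (if u = v ∧ u ≠ x ∧ u ≠ y then rw G x u else 0)
        = if v ≠ x ∧ v ≠ y then rw G x v else 0 := by
      rw [Finset.sum_congr rfl (fun u _ => e1 u), Finset.sum_ite_eq' Finset.univ v]
      simp
    have h2 : ∑ u, (if u = y ∧ v = x then c else 0) = if v = x then c else 0 := by
      by_cases h : v = x <;> simp [h, Finset.sum_ite_eq']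
    rw [h1, h2]
    by_cases hvx : v = x
    · subst hvx; rw [if_neg (by tauto), if_pos rfl, zero_add, ← hνx]
    · by_cases hvy : v = y
      · subst hvy; rw [if_neg (by tauto), if_neg hvx, add_zero, rw_self]
      · rw [if_pos ⟨hvx, hvy⟩, if_neg hvx, add_zero]; exact hagree v hvx hvy
  · have e : ∀ u v, A u v * (G.dist u v : ℝ)
        = (if u = y ∧ v = x then c * (G.dist u v : ℝ) else 0) := by
      intro u v
      simp only [hA]
      by_cases h : u = v
      · subst h
        have hd : (G.dist u u : ℝ) = 0 := by simp
        rw [hd, mul_zero, if_neg (fun h' => hxy (h'.2.symm.trans h'.1))]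
      · rw [if_neg (fun h' => h h'.1), zero_add, ite_mul, zero_mul]
    calc ∑ u, ∑ v, A u v * (G.dist u v : ℝ)
        = ∑ u, ∑ v, (if u = y ∧ v = x then c * (G.dist u v : ℝ) else 0) :=
          Finset.sum_congr rfl fun u _ => Finset.sum_congr rfl fun v _ => e u v
      _ = ∑ u, (if u = y then c * (G.dist u x : ℝ) else 0) := by
          refine Finset.sum_congr rfl fun u _ => ?_
          by_cases h : u = y <;> simp [h, Finset.sum_ite_eq']
      _ = c * (G.dist y x : ℝ) := by rw [Finset.sum_ite_eq' Finset.univ y]; simp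
      _ = c := by rw [hdxy, mul_one]
  · exact lipschitz_of_mem_Icc hconn (fun u => by positivity) (fun u => by split <;> norm_num)
  · simp only [sum_ind]
    rw [hμy, rw_self]; ring

lemma adj_inl_inl {n m : ℕ} {i j : Fin n} : (glue n m).Adj (.inl i) (.inl j) ↔ i ≠ j := Iff.rfl
lemma adj_inl_inr {n m : ℕ} {i j : Fin n} : (glue n m).Adj (.inl i) (.inr j) ↔ cross m i j := Iff.rfl
lemma adj_inr_inl {n m : ℕ} {i j : Fin n} : (glue n m).Adj (.inr j) (.inl i) ↔ cross m i j := Iff.rfl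
lemma adj_inr_inr {n m : ℕ} {i j : Fin n} : (glue n m).Adj (.inr i) (.inr j) ↔ i ≠ j := Iff.rfl

lemma glue_connected (n m : ℕ) (hn : 1 ≤ n) : (glue n m).Connected := by
  haveI : NeZero n := ⟨by omega⟩
  rw [SimpleGraph.connected_iff]
  refine ⟨?_, ⟨Sum.inl 0⟩⟩
  have hbase : ∀ w, (glue n m).Reachable (Sum.inl (0 : Fin n)) w := by
    rintro (i | i)
    · by_cases h : i = 0
      · subst h; exact SimpleGraph.Reachable.refl _
      · exact SimpleGraph.Adj.reachable (adj_inl_inl.mpr (Ne.symm h))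
    · have h0 : (glue n m).Adj (Sum.inl (0 : Fin n)) (Sum.inr (0 : Fin n)) :=
        adj_inl_inr.mpr (Or.inl ⟨by simp, by simp⟩)
      refine h0.reachable.trans ?_
      by_cases h : i = 0
      · subst h; exact SimpleGraph.Reachable.refl _
      · exact SimpleGraph.Adj.reachable (adj_inr_inr.mpr (Ne.symm h))
  intro u v; exact (hbase u).symm.trans (hbase v)

lemma filter_adj_mid {n m : ℕ} [NeZero n] (u : Fin n) (h1 : 1 ≤ (u : ℕ)) (h2 : (u : ℕ) ≤ m) :
    Finset.univ.filter (fun v => (glue n m).Adj (Sum.inl u) v) =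
      insert (Sum.inr (0 : Fin n)) ((Finset.univ.erase u).image Sum.inl) := by
  ext (j | j)
  · simp only [Finset.mem_filter, Finset.mem_univ, true_and, Finset.mem_insert,
      Finset.mem_image, Finset.mem_erase, adj_inl_inl, reduceCtorEq, false_or, Sum.inl.injEq]
    constructor
    · intro h; exact ⟨j, ⟨Ne.symm h, trivial⟩, rfl⟩
    · rintro ⟨a, ⟨ha, -⟩, rfl⟩; exact Ne.symm ha
  · simp only [Finset.mem_filter, Finset.mem_univ, true_and, Finset.mem_insert,
      Finset.mem_image, Finset.mem_erase, adj_inl_inr, cross, reduceCtorEq, Sum.inr.injEq,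
      and_false, exists_false, or_false]
    rw [show (j = 0) ↔ ((j:ℕ) = 0) from by rw [Fin.ext_iff, Fin.val_zero]]
    omega

lemma filter_adj_high {n m : ℕ} (u : Fin n) (h2 : m < (u : ℕ)) :
    Finset.univ.filter (fun v => (glue n m).Adj (Sum.inl u) v) =
      (Finset.univ.erase u).image Sum.inl := by
  ext (j | j)
  · simp only [Finset.mem_filter, Finset.mem_univ, true_and,
      Finset.mem_image, Finset.mem_erase, adj_inl_inl, Sum.inl.injEq]
    constructor
    · intro h; exact ⟨j, ⟨Ne.symm h, trivial⟩, rfl⟩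
    · rintro ⟨a, ⟨ha, -⟩, rfl⟩; exact Ne.symm ha
  · simp only [Finset.mem_filter, Finset.mem_univ, true_and,
      Finset.mem_image, adj_inl_inr, cross, reduceCtorEq, and_false, exists_false, iff_false]
    omega

lemma deg_eq_card_filter {n m : ℕ} (x : Fin n ⊕ Fin n) :
    Nat.card ((glue n m).neighborSet x) =
      (Finset.univ.filter (fun v => (glue n m).Adj x v)).card := by
  have h : (glue n m).neighborSet x = ↑(Finset.univ.filter (fun v => (glue n m).Adj x v)) := by
    ext v; simp [SimpleGraph.mem_neighborSet]
  rw [h, Nat.card_coe_set_eq, Set.ncard_coe_finset]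

lemma deg_mid {n m : ℕ} [NeZero n] (u : Fin n) (h1 : 1 ≤ (u : ℕ)) (h2 : (u : ℕ) ≤ m) :
    deg (glue n m) (Sum.inl u) = n := by
  rw [deg, deg_eq_card_filter, filter_adj_mid u h1 h2,
    Finset.card_insert_of_notMem (by simp),
    Finset.card_image_of_injective _ Sum.inl_injective,
    Finset.card_erase_of_mem (Finset.mem_univ u), Finset.card_univ, Fintype.card_fin]
  have : 0 < n := Nat.pos_of_ne_zero (NeZero.ne n)
  omega

lemma deg_high {n m : ℕ} (u : Fin n) (h2 : m < (u : ℕ)) :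
    deg (glue n m) (Sum.inl u) = n - 1 := by
  rw [deg, deg_eq_card_filter, filter_adj_high u h2,
    Finset.card_image_of_injective _ Sum.inl_injective,
    Finset.card_erase_of_mem (Finset.mem_univ u), Finset.card_univ, Fintype.card_fin]

lemma W_case2 {n m : ℕ} (hn : 5 ≤ n) (hm : 1 ≤ m) (hm' : m ≤ n - 2)
    (u₁ u' : Fin n) (h11 : 1 ≤ (u₁ : ℕ)) (h12 : (u₁ : ℕ) ≤ m) (h2 : m < (u' : ℕ)) :
    W (glue n m) (rw (glue n m) (Sum.inl u₁)) (rw (glue n m) (Sum.inl u')) = 2 * (n : ℝ)⁻¹ := by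
  haveI : NeZero n := ⟨by omega⟩
  set N : ℝ := (n : ℝ) with hNdef
  have hN5 : (5 : ℝ) ≤ N := by rw [hNdef]; exact_mod_cast hn
  have hN0 : N ≠ 0 := by intro h; rw [h] at hN5; norm_num at hN5
  have hM0 : N - 1 ≠ 0 := by intro h; nlinarith
  have hcast : ((n - 1 : ℕ) : ℝ) = N - 1 := by
    rw [Nat.cast_sub (by omega)]; norm_num; rfl
  have hconn := glue_connected n m (by omega)
  have hxyne : u₁ ≠ u' := fun h => by rw [h] at h12; omega
  have hadj : (glue n m).Adj (Sum.inl u₁) (Sum.inl u') := adj_inl_inl.mpr hxyne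
  have hzx : (glue n m).Adj ((Sum.inr (0 : Fin n) : Fin n ⊕ Fin n)) (Sum.inl u₁) :=
    adj_inr_inl.mpr (Or.inr (Or.inr ⟨by simp, h11, h12⟩))
  have hyz : ¬ (glue n m).Adj (Sum.inl u') ((Sum.inr (0 : Fin n) : Fin n ⊕ Fin n)) := by
    rw [adj_inl_inr]
    unfold cross
    have : ((0 : Fin n) : ℕ) = 0 := by simp
    omega
  have hμ : ∀ v, rw (glue n m) (Sum.inl u₁) v
      = if (glue n m).Adj (Sum.inl u₁) v then N⁻¹ else 0 := by
    intro v; unfold OR.rw; rw [deg_mid u₁ h11 h12]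
  have hν : ∀ v, rw (glue n m) (Sum.inl u') v
      = if (glue n m).Adj (Sum.inl u') v then (N - 1)⁻¹ else 0 := by
    intro v; unfold OR.rw; rw [deg_high u' h2, hcast]
  have hcount : ∀ r : ℝ, ∑ v : Fin n ⊕ Fin n, (if (glue n m).Adj (Sum.inl u') v then r else 0)
      = ((n - 1 : ℕ) : ℝ) * r := by
    intro r
    rw [← Finset.sum_filter, filter_adj_high u' h2, Finset.sum_const,
      Finset.card_image_of_injective _ Sum.inl_injective,
      Finset.card_erase_of_mem (Finset.mem_univ u'), Finset.card_univ, Fintype.card_fin,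
      nsmul_eq_mul]
  have hkey : ((n - 1 : ℕ) : ℝ) * (N * (N - 1))⁻¹ = N⁻¹ := by
    rw [hcast]; field_simp
  have hiff : ∀ u, u ≠ Sum.inl u₁ → u ≠ Sum.inl u' → u ≠ (Sum.inr (0 : Fin n) : Fin n ⊕ Fin n) →
      ((glue n m).Adj (Sum.inl u₁) u ↔ (glue n m).Adj (Sum.inl u') u) := by
    rintro (j | j) hux huy huz
    · rw [adj_inl_inl, adj_inl_inl]
      have hj1 : j ≠ u₁ := fun h => hux (by rw [h])
      have hj2 : j ≠ u' := fun h => huy (by rw [h])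
      constructor
      · intro _; exact Ne.symm hj2
      · intro _; exact Ne.symm hj1
    · rw [adj_inl_inr, adj_inl_inr]
      have hj0 : (j : ℕ) ≠ 0 := by
        intro h
        exact huz (congrArg Sum.inr (Fin.ext (by rw [h, Fin.val_zero])))
      unfold cross
      omega
  set A : (Fin n ⊕ Fin n) → (Fin n ⊕ Fin n) → ℝ := fun u v =>
    (if ((glue n m).Adj (Sum.inl u₁) u ∧ (glue n m).Adj (Sum.inl u') u) ∧ u = v
        then N⁻¹ else 0)
    + (if u = Sum.inl u' ∧ (glue n m).Adj (Sum.inl u') v then (N * (N - 1))⁻¹ else 0)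
    + (if u = (Sum.inr (0 : Fin n) : Fin n ⊕ Fin n) ∧ v = Sum.inl u₁ then N⁻¹ else 0) with hA
  have hinv1 : (0:ℝ) ≤ N⁻¹ := inv_nonneg.mpr (by linarith)
  have hinv2 : (0:ℝ) ≤ (N * (N - 1))⁻¹ := inv_nonneg.mpr (by nlinarith)
  set f : (Fin n ⊕ Fin n) → ℝ := fun v =>
    (if v = Sum.inl u' then (1:ℝ) else 0) + (if v = (Sum.inr (0 : Fin n) : Fin n ⊕ Fin n) then 1 else 0) with hf
  refine W_eq (glue n m) _ _ A f (2 * N⁻¹) ⟨?_, Set.toFinite _, ?_, ?_⟩ ?_ ?_ ?_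
  · intro u v
    simp only [hA]
    apply add_nonneg (add_nonneg ?_ ?_) ?_ <;> split
    · exact hinv1
    · exact le_refl 0
    · exact hinv2
    · exact le_refl 0
    · exact hinv1
    · exact le_refl 0
  · intro u
    rw [finsum_eq_sum_of_fintype]
    simp only [hA]
    rw [Finset.sum_add_distrib, Finset.sum_add_distrib]
    have hS1 : ∑ v : Fin n ⊕ Fin n, (if ((glue n m).Adj (Sum.inl u₁) u ∧ (glue n m).Adj (Sum.inl u') u) ∧ u = v
        then N⁻¹ else 0)
        = if (glue n m).Adj (Sum.inl u₁) u ∧ (glue n m).Adj (Sum.inl u') u then N⁻¹ else 0 := by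
      by_cases h : (glue n m).Adj (Sum.inl u₁) u ∧ (glue n m).Adj (Sum.inl u') u <;>
        simp [h, Finset.sum_ite_eq]
    have hS2 : ∑ v : Fin n ⊕ Fin n, (if u = Sum.inl u' ∧ (glue n m).Adj (Sum.inl u') v
        then (N * (N - 1))⁻¹ else 0) = if u = Sum.inl u' then N⁻¹ else 0 := by
      by_cases h : u = Sum.inl u'
      · rw [if_pos h]
        simp only [h, true_and]
        rw [hcount, hkey]
      · simp [h]
    have hS3 : ∑ v : Fin n ⊕ Fin n, (if u = (Sum.inr (0 : Fin n) : Fin n ⊕ Fin n) ∧ v = Sum.inl u₁ then N⁻¹ else 0)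
        = if u = (Sum.inr (0 : Fin n) : Fin n ⊕ Fin n) then N⁻¹ else 0 := by
      by_cases h : u = (Sum.inr (0 : Fin n) : Fin n ⊕ Fin n) <;> simp [h, Finset.sum_ite_eq']
    rw [hS1, hS2, hS3, hμ u]
    by_cases huy : u = Sum.inl u'
    · subst huy
      rw [if_neg (fun h => (glue n m).loopless.irrefl _ h.2), if_pos rfl, if_neg (by simp),
        if_pos hadj]
      ring
    · by_cases huz : u = (Sum.inr (0 : Fin n) : Fin n ⊕ Fin n)
      · subst huz
        rw [if_neg (fun h => hyz h.2), if_neg (by simp), if_pos rfl, if_pos hzx.symm]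
        ring
      · by_cases hux : u = Sum.inl u₁
        · subst hux
          rw [if_neg (fun h => (glue n m).loopless.irrefl _ h.1), if_neg huy, if_neg huz,
            if_neg ((glue n m).loopless.irrefl _)]
          ring
        · have hiff' := hiff u hux huy huz
          by_cases hAx : (glue n m).Adj (Sum.inl u₁) u
          · rw [if_pos ⟨hAx, hiff'.mp hAx⟩, if_neg huy, if_neg huz, if_pos hAx]; ring
          · rw [if_neg (fun h => hAx h.1), if_neg huy, if_neg huz, if_neg hAx]; ring
  · intro v
    rw [finsum_eq_sum_of_fintype]
    simp only [hA]
    rw [Finset.sum_add_distrib, Finset.sum_add_distrib]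
    have e1 : ∀ u, (if ((glue n m).Adj (Sum.inl u₁) u ∧ (glue n m).Adj (Sum.inl u') u) ∧ u = v
        then N⁻¹ else 0)
        = (if u = v then
            (if (glue n m).Adj (Sum.inl u₁) v ∧ (glue n m).Adj (Sum.inl u') v then N⁻¹ else 0)
          else 0) := by
      intro u
      by_cases h : u = v
      · subst h
        by_cases h' : (glue n m).Adj (Sum.inl u₁) u ∧ (glue n m).Adj (Sum.inl u') u <;>
          simp [h']
      · simp [h]
    have hT1 : ∑ u : Fin n ⊕ Fin n, (if ((glue n m).Adj (Sum.inl u₁) u ∧ (glue n m).Adj (Sum.inl u') u) ∧ u = v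
        then N⁻¹ else 0)
        = if (glue n m).Adj (Sum.inl u₁) v ∧ (glue n m).Adj (Sum.inl u') v then N⁻¹ else 0 := by
      rw [Finset.sum_congr rfl (fun u _ => e1 u), Finset.sum_ite_eq' Finset.univ v]
      simp
    have hT2 : ∑ u : Fin n ⊕ Fin n, (if u = Sum.inl u' ∧ (glue n m).Adj (Sum.inl u') v
        then (N * (N - 1))⁻¹ else 0)
        = if (glue n m).Adj (Sum.inl u') v then (N * (N - 1))⁻¹ else 0 := by
      by_cases h : (glue n m).Adj (Sum.inl u') v <;> simp [h, Finset.sum_ite_eq']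
    have hT3 : ∑ u : Fin n ⊕ Fin n, (if u = (Sum.inr (0 : Fin n) : Fin n ⊕ Fin n) ∧ v = Sum.inl u₁ then N⁻¹ else 0)
        = if v = Sum.inl u₁ then N⁻¹ else 0 := by
      by_cases h : v = Sum.inl u₁ <;> simp [h, Finset.sum_ite_eq']
    rw [hT1, hT2, hT3, hν v]
    by_cases hvx : v = Sum.inl u₁
    · subst hvx
      rw [if_neg (fun h => (glue n m).loopless.irrefl _ h.1), if_pos hadj.symm, if_pos rfl,
        if_pos hadj.symm]
      field_simp
      ring
    · by_cases hvy : v = Sum.inl u'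
      · subst hvy
        rw [if_neg (fun h => (glue n m).loopless.irrefl _ h.2), if_neg ((glue n m).loopless.irrefl _),
          if_neg hvx, if_neg ((glue n m).loopless.irrefl _)]
        ring
      · by_cases hvz : v = (Sum.inr (0 : Fin n) : Fin n ⊕ Fin n)
        · subst hvz
          rw [if_neg (fun h => hyz h.2), if_neg hyz, if_neg (by simp), if_neg hyz]
          ring
        · have hiff' := hiff v hvx hvy hvz
          by_cases hAv : (glue n m).Adj (Sum.inl u') v
          · rw [if_pos ⟨hiff'.mpr hAv, hAv⟩, if_pos hAv, if_neg hvx, if_pos hAv]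
            field_simp
            ring
          · rw [if_neg (fun h => hAv h.2), if_neg hAv, if_neg hvx, if_neg hAv]
            ring
  · have split3 : ∀ u v, A u v * ((glue n m).dist u v : ℝ)
        = (if ((glue n m).Adj (Sum.inl u₁) u ∧ (glue n m).Adj (Sum.inl u') u) ∧ u = v
            then N⁻¹ else 0) * ((glue n m).dist u v : ℝ)
          + (if u = Sum.inl u' ∧ (glue n m).Adj (Sum.inl u') v
            then (N * (N - 1))⁻¹ else 0) * ((glue n m).dist u v : ℝ)
          + (if u = (Sum.inr (0 : Fin n) : Fin n ⊕ Fin n) ∧ v = Sum.inl u₁ then N⁻¹ else 0)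
            * ((glue n m).dist u v : ℝ) := by
      intro u v; simp only [hA]; ring
    rw [Finset.sum_congr rfl (fun u _ => Finset.sum_congr rfl (fun v _ => split3 u v))]
    simp only [Finset.sum_add_distrib]
    have hC1 : ∑ u, ∑ v,
        (if ((glue n m).Adj (Sum.inl u₁) u ∧ (glue n m).Adj (Sum.inl u') u) ∧ u = v
          then N⁻¹ else 0) * ((glue n m).dist u v : ℝ) = 0 := by
      refine Finset.sum_eq_zero fun u _ => Finset.sum_eq_zero fun v _ => ?_
      by_cases h : ((glue n m).Adj (Sum.inl u₁) u ∧ (glue n m).Adj (Sum.inl u') u) ∧ u = v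
      · obtain ⟨-, rfl⟩ := h
        simp
      · simp [h]
    have hC2 : ∑ u, ∑ v : Fin n ⊕ Fin n, (if u = Sum.inl u' ∧ (glue n m).Adj (Sum.inl u') v
        then (N * (N - 1))⁻¹ else 0) * ((glue n m).dist u v : ℝ) = N⁻¹ := by
      have e : ∀ u, (∑ v : Fin n ⊕ Fin n, (if u = Sum.inl u' ∧ (glue n m).Adj (Sum.inl u') v
          then (N * (N - 1))⁻¹ else 0) * ((glue n m).dist u v : ℝ))
          = if u = Sum.inl u' then N⁻¹ else 0 := by
        intro u
        by_cases h : u = Sum.inl u'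
        · subst h
          rw [if_pos rfl]
          calc ∑ v : Fin n ⊕ Fin n, (if Sum.inl u' = Sum.inl u' ∧ (glue n m).Adj (Sum.inl u') v
              then (N * (N - 1))⁻¹ else 0) * ((glue n m).dist (Sum.inl u') v : ℝ)
              = ∑ v : Fin n ⊕ Fin n, (if (glue n m).Adj (Sum.inl u') v then (N * (N - 1))⁻¹ else 0) := by
                refine Finset.sum_congr rfl fun v _ => ?_
                by_cases hAv : (glue n m).Adj (Sum.inl u') v
                · rw [if_pos ⟨rfl, hAv⟩, if_pos hAv,
                    SimpleGraph.dist_eq_one_iff_adj.mpr hAv]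
                  norm_num
                · rw [if_neg (fun hh => hAv hh.2), if_neg hAv, zero_mul]
            _ = N⁻¹ := by rw [hcount, hkey]
        · simp [h]
      rw [Finset.sum_congr rfl (fun u _ => e u), Finset.sum_ite_eq' Finset.univ (Sum.inl u')]
      simp
    have hC3 : ∑ u, ∑ v : Fin n ⊕ Fin n, (if u = (Sum.inr (0 : Fin n) : Fin n ⊕ Fin n) ∧ v = Sum.inl u₁ then N⁻¹ else 0)
        * ((glue n m).dist u v : ℝ) = N⁻¹ := by
      have e : ∀ u, (∑ v : Fin n ⊕ Fin n, (if u = (Sum.inr (0 : Fin n) : Fin n ⊕ Fin n) ∧ v = Sum.inl u₁ then N⁻¹ else 0)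
          * ((glue n m).dist u v : ℝ))
          = if u = (Sum.inr (0 : Fin n) : Fin n ⊕ Fin n)
            then N⁻¹ * ((glue n m).dist u (Sum.inl u₁) : ℝ) else 0 := by
        intro u
        by_cases h : u = (Sum.inr (0 : Fin n) : Fin n ⊕ Fin n) <;> simp [h, Finset.sum_ite_eq']
      rw [Finset.sum_congr rfl (fun u _ => e u),
        Finset.sum_ite_eq' Finset.univ ((Sum.inr (0 : Fin n) : Fin n ⊕ Fin n))]
      simp [SimpleGraph.dist_eq_one_iff_adj.mpr hzx]
    rw [hC1, hC2, hC3]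
    ring
  · refine lipschitz_of_mem_Icc hconn ?_ ?_
    · intro u
      simp only [hf]
      apply add_nonneg <;> split <;> norm_num
    · intro u
      simp only [hf]
      by_cases h1' : u = Sum.inl u'
      · subst h1'; simp
      · rw [if_neg h1', zero_add]; split <;> norm_num
  · have hind : ∀ (yy : Fin n ⊕ Fin n) (g : (Fin n ⊕ Fin n) → ℝ),
        ∑ u : Fin n ⊕ Fin n, (if u = yy then (1:ℝ) else 0) * g u = g yy := by
      intro yy g
      have e : ∀ u, (if u = yy then (1:ℝ) else 0) * g u = if u = yy then g u else 0 := by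
        intro u; split <;> simp
      rw [Finset.sum_congr rfl (fun u _ => e u), Finset.sum_ite_eq' Finset.univ yy]; simp
    simp only [hf, add_mul, Finset.sum_add_distrib, hind]
    rw [hμ (Sum.inl u'), hμ ((Sum.inr (0 : Fin n) : Fin n ⊕ Fin n)), hν (Sum.inl u'), hν ((Sum.inr (0 : Fin n) : Fin n ⊕ Fin n)),
      if_pos hadj, if_pos hzx.symm, if_neg ((glue n m).loopless.irrefl _), if_neg hyz]
    ring

end OR


theorem glue_ricci_inner_edges (n m : ℕ) (hn : 5 ≤ n) (hm : 1 ≤ m) (hm' : m ≤ n - 2) :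
    (∀ u₁ u₂ : Fin n, 1 ≤ (u₁ : ℕ) → (u₁ : ℕ) ≤ m → 1 ≤ (u₂ : ℕ) → (u₂ : ℕ) ≤ m → u₁ ≠ u₂ →
      OR.ricci (OR.glue n m) (Sum.inl u₁) (Sum.inl u₂) = ((n : ℝ) - 1) / n) ∧
    (∀ u₁ u' : Fin n, 1 ≤ (u₁ : ℕ) → (u₁ : ℕ) ≤ m → m < (u' : ℕ) →
      OR.ricci (OR.glue n m) (Sum.inl u₁) (Sum.inl u') = ((n : ℝ) - 2) / n) ∧
    (∀ u' u'' : Fin n, m < (u' : ℕ) → m < (u'' : ℕ) → u' ≠ u'' →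
      OR.ricci (OR.glue n m) (Sum.inl u') (Sum.inl u'') = ((n : ℝ) - 2) / ((n : ℝ) - 1)) := by
  constructor
  · intro u₁ u₂ h11 h12 h21 h22 hne
    haveI : NeZero n := ⟨by omega⟩
    have hconn := OR.glue_connected n m (by omega)
    have hadj : (OR.glue n m).Adj (Sum.inl u₁) (Sum.inl u₂) := OR.adj_inl_inl.mpr hne
    have hμy : OR.rw (OR.glue n m) (Sum.inl u₁) (Sum.inl u₂) = (n : ℝ)⁻¹ := by
      unfold OR.rw
      rw [OR.deg_mid u₁ h11 h12, if_pos hadj]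
    have hνx : OR.rw (OR.glue n m) (Sum.inl u₂) (Sum.inl u₁) = (n : ℝ)⁻¹ := by
      unfold OR.rw
      rw [OR.deg_mid u₂ h21 h22, if_pos hadj.symm]
    have hW : OR.W (OR.glue n m) (OR.rw (OR.glue n m) (Sum.inl u₁))
        (OR.rw (OR.glue n m) (Sum.inl u₂)) = (n : ℝ)⁻¹ := by
      refine OR.W_single hconn hadj _ ?_ hμy hνx
      intro u hux huy
      have hiff : (OR.glue n m).Adj (Sum.inl u₁) u ↔ (OR.glue n m).Adj (Sum.inl u₂) u := by
        cases u with
        | inl j =>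
          rw [OR.adj_inl_inl, OR.adj_inl_inl]
          have h1 : j ≠ u₁ := fun h => hux (by rw [h])
          have h2 : j ≠ u₂ := fun h => huy (by rw [h])
          constructor
          · intro _; exact Ne.symm h2
          · intro _; exact Ne.symm h1
        | inr j =>
          rw [OR.adj_inl_inr, OR.adj_inl_inr]
          unfold OR.cross
          omega
      unfold OR.rw
      rw [OR.deg_mid u₁ h11 h12, OR.deg_mid u₂ h21 h22]
      by_cases h : (OR.glue n m).Adj (Sum.inl u₁) u
      · rw [if_pos h, if_pos (hiff.mp h)]
      · rw [if_neg h, if_neg (fun h' => h (hiff.mpr h'))]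
    have hd : (OR.glue n m).dist (Sum.inl u₁) (Sum.inl u₂) = 1 :=
      SimpleGraph.dist_eq_one_iff_adj.mpr hadj
    have hn0 : (n : ℝ) ≠ 0 := by positivity
    unfold OR.ricci
    rw [hW, hd]
    push_cast
    field_simp
  constructor
  · intro u₁ u' h11 h12 h2
    haveI : NeZero n := ⟨by omega⟩
    have hconn := OR.glue_connected n m (by omega)
    have hne : u₁ ≠ u' := fun h => by rw [h] at h12; omega
    have hadj : (OR.glue n m).Adj (Sum.inl u₁) (Sum.inl u') := OR.adj_inl_inl.mpr hne
    have hW := OR.W_case2 hn hm hm' u₁ u' h11 h12 h2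
    have hd : (OR.glue n m).dist (Sum.inl u₁) (Sum.inl u') = 1 :=
      SimpleGraph.dist_eq_one_iff_adj.mpr hadj
    have hn0 : (n : ℝ) ≠ 0 := by positivity
    unfold OR.ricci
    rw [hW, hd]
    push_cast
    field_simp
  · intro u' u'' h1 h2 hne
    haveI : NeZero n := ⟨by omega⟩
    have hconn := OR.glue_connected n m (by omega)
    have hadj : (OR.glue n m).Adj (Sum.inl u') (Sum.inl u'') := OR.adj_inl_inl.mpr hne
    have hcast : ((n - 1 : ℕ) : ℝ) = (n : ℝ) - 1 := by
      rw [Nat.cast_sub (by omega)]; norm_num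
    have hμy : OR.rw (OR.glue n m) (Sum.inl u') (Sum.inl u'') = ((n : ℝ) - 1)⁻¹ := by
      unfold OR.rw
      rw [OR.deg_high u' h1, if_pos hadj, hcast]
    have hνx : OR.rw (OR.glue n m) (Sum.inl u'') (Sum.inl u') = ((n : ℝ) - 1)⁻¹ := by
      unfold OR.rw
      rw [OR.deg_high u'' h2, if_pos hadj.symm, hcast]
    have hW : OR.W (OR.glue n m) (OR.rw (OR.glue n m) (Sum.inl u'))
        (OR.rw (OR.glue n m) (Sum.inl u'')) = ((n : ℝ) - 1)⁻¹ := by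
      refine OR.W_single hconn hadj _ ?_ hμy hνx
      intro u hux huy
      have hiff : (OR.glue n m).Adj (Sum.inl u') u ↔ (OR.glue n m).Adj (Sum.inl u'') u := by
        cases u with
        | inl j =>
          rw [OR.adj_inl_inl, OR.adj_inl_inl]
          have hj1 : j ≠ u' := fun h => hux (by rw [h])
          have hj2 : j ≠ u'' := fun h => huy (by rw [h])
          constructor
          · intro _; exact Ne.symm hj2
          · intro _; exact Ne.symm hj1
        | inr j =>
          rw [OR.adj_inl_inr, OR.adj_inl_inr]
          unfold OR.cross
          omega
      unfold OR.rw
      rw [OR.deg_high u' h1, OR.deg_high u'' h2]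
      by_cases h : (OR.glue n m).Adj (Sum.inl u') u
      · rw [if_pos h, if_pos (hiff.mp h)]
      · rw [if_neg h, if_neg (fun h' => h (hiff.mpr h'))]
    have hd : (OR.glue n m).dist (Sum.inl u') (Sum.inl u'') = 1 :=
      SimpleGraph.dist_eq_one_iff_adj.mpr hadj
    have hn1 : (n : ℝ) - 1 ≠ 0 := by
      have : (5:ℝ) ≤ (n:ℝ) := by exact_mod_cast hn
      nlinarith
    unfold OR.ricci
    rw [hW, hd]
    push_cast
    field_simp
    ring
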